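/- Define the k-linear map Π : k[X] → k[X] by Π(vt) = vt − δ_{v,e}·Σ_{u∈G} u for v ∈ G, t ∈ M (where δ_{v,e} = 1 if v = e and 0 otherwise), and set 1̄ = Σ_{u∈G} u ∈ k[X]. Then: (a) ker Π = k·1̄; (b) k·1̄ is a crossed submodule of k[X], i.e. 1̄ ⋊̃ x = 1̄ for all x ∈ X and 1̄ ∈ J_e; (c) for every irreducible crossed submodule V ⊆ k[X] with V ≠ k·1̄ one has V ∩ k·1̄ = 0, so the restriction of Π to V is injective. -/

import Mathlib

/-- The linearization of the right action `⋊̃ y` on `k[X] = X →₀ k`. -/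
noncomputable def linTact (k : Type*) [Field k] {X : Type*} (tact : X → X → X) (y : X) :
    (X →₀ k) →ₗ[k] (X →₀ k) :=
  Finsupp.lmapDomain k k (fun x => tact x y)

/-- The homogeneous component `J_z = span_k ‖·‖⁻¹(z)` of `k[X]`. -/
noncomputable def Jsub (k : Type*) [Field k] {X : Type*} (norm : X → X) (z : X) :
    Submodule k (X →₀ k) :=
  Submodule.span k ((fun x => Finsupp.single x (1 : k)) '' (norm ⁻¹' {z}))

/-- A subspace `V ⊆ k[X]` is a crossed submodule if it is stable under the
linearized `⋊̃`-action of `X` and `V = ⊕_{z∈Z}(V ∩ J_z)`. -/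
def IsCrossedSubmodule (k : Type*) [Field k] {X : Type*} (norm : X → X)
    (tact : X → X → X) (V : Submodule k (X →₀ k)) : Prop :=
  (∀ y : X, V.map (linTact k tact y) ≤ V) ∧
  V = ⨆ z ∈ Set.range norm, V ⊓ Jsub k norm z

/-- A crossed submodule is irreducible if it is nonzero and the only crossed
submodules contained in it are `0` and itself. -/
def IsIrreducibleCrossedSubmodule (k : Type*) [Field k] {X : Type*} (norm : X → X)
    (tact : X → X → X) (V : Submodule k (X →₀ k)) : Prop :=
  V ≠ ⊥ ∧ IsCrossedSubmodule k norm tact V ∧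
    ∀ W : Submodule k (X →₀ k), IsCrossedSubmodule k norm tact W → W ≤ V → W = ⊥ ∨ W = V

/-- **The intertwiner `Π` and the invariant element `1̄`.**
Define `Π : k[X] → k[X]` by `Π(vt) = vt − δ_{v,e} Σ_{u∈G} u` and set
`1̄ = Σ_{u∈G} u`.  Then (a) `ker Π = k·1̄`; (b) `k·1̄` is a crossed submodule:
`1̄ ⋊̃ x = 1̄` for all `x ∈ X` and `1̄ ∈ J_e`; (c) for every irreducible crossed
submodule `V ≠ k·1̄` one has `V ∩ k·1̄ = 0`, so `Π` restricted to `V` is injective. -/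
theorem intertwiner_Pi_kernel_and_injectivity
    {k X : Type*} [Field k] [Group X] [Fintype X] (G M : Subgroup X)
    [Fintype ↥G] [DecidableEq ↥G]
    (hbij : Function.Bijective (fun p : ↥G × ↥M => (p.1 : X) * (p.2 : X)))
    (rho : ↥M → ↥G → ↥G) (sig : ↥M → ↥G → ↥M)
    (hfact : ∀ (s : ↥M) (u : ↥G), (s : X) * (u : X) = (rho s u : X) * (sig s u : X))
    (norm : X → X)
    (hnorm : ∀ (v : ↥G) (t : ↥M), norm ((v : X) * (t : X)) = (v : X)⁻¹ * (t : X)⁻¹ * (v : X))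
    (tact : X → X → X)
    (htact : ∀ (v u : ↥G) (t s : ↥M),
      tact ((v : X) * (t : X)) ((u : X) * (s : X)) =
        (rho (sig s⁻¹ (v * u)⁻¹) (v * u) : X) *
          ((sig s⁻¹ (v * u)⁻¹ : X) * (t : X) * (sig s⁻¹ (v * u)⁻¹ : X)⁻¹))
    (onebar : X →₀ k)
    (honebar : onebar = ∑ u : ↥G, Finsupp.single ((u : X)) (1 : k))
    (P : (X →₀ k) →ₗ[k] (X →₀ k))
    (hP : ∀ (v : ↥G) (t : ↥M),
      P (Finsupp.single ((v : X) * (t : X)) (1 : k)) =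
        Finsupp.single ((v : X) * (t : X)) (1 : k) -
          (if v = 1 then (1 : k) else 0) • onebar) :
    (LinearMap.ker P = Submodule.span k {onebar}) ∧
    (∀ x : X, Finsupp.mapDomain (fun w => tact w x) onebar = onebar) ∧
    (onebar ∈ Jsub k norm (1 : X)) ∧
    (∀ V : Submodule k (X →₀ k), IsIrreducibleCrossedSubmodule k norm tact V →
      V ≠ Submodule.span k {onebar} →
      V ⊓ Submodule.span k {onebar} = ⊥ ∧ ∀ a ∈ V, ∀ b ∈ V, P a = P b → a = b) := by
  classical
  haveI : Fintype ↥M := Fintype.ofFinite ↥M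
  -- uniqueness of factorization
  have uniq : ∀ (u1 u2 : ↥G) (s1 s2 : ↥M),
      (u1 : X) * (s1 : X) = (u2 : X) * (s2 : X) → u1 = u2 ∧ s1 = s2 := by
    intro u1 u2 s1 s2 h
    have := hbij.1 (a₁ := (u1, s1)) (a₂ := (u2, s2)) h
    exact ⟨congrArg Prod.fst this, congrArg Prod.snd this⟩
  -- rho s is injective
  have rhoInj : ∀ s : ↥M, Function.Injective (rho s) := by
    intro s u1 u2 h
    have h1 := hfact s u1
    have h2 := hfact s u2
    rw [h] at h1
    have key : ((u2⁻¹ * u1 : ↥G) : X) * ((1 : ↥M) : X)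
        = ((1 : ↥G) : X) * (((sig s u2)⁻¹ * sig s u1 : ↥M) : X) := by
      push_cast
      have e1 : (u1 : X) = (s : X)⁻¹ * ((rho s u2 : X) * (sig s u1 : X)) := by
        rw [← h1]; group
      have e2 : (u2 : X) = (s : X)⁻¹ * ((rho s u2 : X) * (sig s u2 : X)) := by
        rw [← h2]; group
      rw [e1, e2]; group
    have := (uniq _ _ _ _ key).1
    exact (inv_mul_eq_one.mp this).symm
  -- the composed map identity
  have key3 : ∀ (s : ↥M) (w : ↥G), rho (sig s⁻¹ w⁻¹) w = (rho s⁻¹ w⁻¹)⁻¹ := by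
    intro s w
    have h1 := hfact s⁻¹ w⁻¹
    have h2 := hfact (sig s⁻¹ w⁻¹) w
    have key : ((rho (sig s⁻¹ w⁻¹) w : X)) * ((sig (sig s⁻¹ w⁻¹) w : X))
        = (((rho s⁻¹ w⁻¹)⁻¹ : ↥G) : X) * ((s⁻¹ : ↥M) : X) := by
      rw [← h2]
      have e1 : ((sig s⁻¹ w⁻¹ : ↥M) : X)
          = ((rho s⁻¹ w⁻¹ : ↥G) : X)⁻¹ * ((s⁻¹ : ↥M) : X) * ((w⁻¹ : ↥G) : X) := by
        rw [← mul_left_cancel_iff (a := (rho s⁻¹ w⁻¹ : X)), ← h1]; group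
      push_cast at e1 ⊢
      rw [e1]; group
    exact (uniq _ _ _ _ key).1
  -- action of tact on G-elements
  have tactG : ∀ (u u' : ↥G) (s : ↥M),
      tact (u : X) ((u' : X) * (s : X)) = (((rho s⁻¹ (u * u')⁻¹)⁻¹ : ↥G) : X) := by
    intro u u' s
    have h := htact u u' 1 s
    simp only [OneMemClass.coe_one, mul_one] at h
    rw [mul_inv_cancel] at h
    rw [mul_one] at h
    rw [h, key3 s (u * u')]
  -- (b1)
  have hb1 : ∀ x : X, Finsupp.mapDomain (fun w => tact w x) onebar = onebar := by
    intro x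
    obtain ⟨⟨u', s⟩, rfl⟩ := hbij.2 x
    set g : ↥G → ↥G := fun u => (rho s⁻¹ (u * u')⁻¹)⁻¹ with hg
    have hginj : Function.Injective g := by
      intro u1 u2 h
      have h2 := rhoInj s⁻¹ (inv_injective h)
      have h3 := inv_injective h2
      exact mul_right_cancel h3
    have hgbij : Function.Bijective g := Finite.injective_iff_bijective.mp hginj
    rw [honebar, Finsupp.mapDomain_finset_sum]
    simp only [Finsupp.mapDomain_single, tactG]
    exact Equiv.sum_comp (Equiv.ofBijective g hgbij)
      (fun u => Finsupp.single ((u : X)) (1 : k))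
  -- (b2)
  have hb2 : onebar ∈ Jsub k norm (1 : X) := by
    rw [honebar]
    apply Submodule.sum_mem
    intro u _
    apply Submodule.subset_span
    refine ⟨(u : X), ?_, rfl⟩
    have := hnorm u 1
    simpa using this
  -- key formula for P
  have hPf : ∀ f : X →₀ k, P f = f - (∑ t : ↥M, f ((t : X))) • onebar := by
    intro f
    induction f using Finsupp.induction_linear with
    | zero => simp
    | add f g hf hg =>
      rw [map_add, hf, hg]
      simp only [Finsupp.add_apply, Finset.sum_add_distrib, add_smul]
      abel
    | single a b =>
      obtain ⟨⟨v, t⟩, rfl⟩ := hbij.2 a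
      have hb : Finsupp.single ((v : X) * (t : X)) b
          = b • Finsupp.single ((v : X) * (t : X)) (1 : k) := by
        simp [Finsupp.smul_single]
      rw [hb, map_smul, hP v t]
      by_cases hv : v = 1
      · subst hv
        have hsum : (∑ t' : ↥M, (Finsupp.single (((1 : ↥G) : X) * (t : X)) b) ((t' : X))) = b := by
          simp only [OneMemClass.coe_one, one_mul, Finsupp.single_apply]
          simp [SetLike.coe_eq_coe]
        rw [← hb, hsum]
        simp [smul_sub, smul_smul, Finsupp.smul_single]
      · have hsum : (∑ t' : ↥M, (Finsupp.single ((v : X) * (t : X)) b) ((t' : X))) = 0 := by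
          apply Finset.sum_eq_zero
          intro t' _
          rw [Finsupp.single_apply, if_neg]
          intro h
          exact hv (uniq v 1 t t' (by simpa using h)).1
        rw [← hb, hsum]
        simp [hv, smul_sub, Finsupp.smul_single]
  -- P onebar = 0
  have hPone : P onebar = 0 := by
    have h1 : ∀ u : ↥G, P (Finsupp.single ((u : X)) (1 : k))
        = Finsupp.single ((u : X)) (1 : k) - (if u = 1 then (1 : k) else 0) • onebar := by
      intro u
      have := hP u 1
      simpa using this
    rw [honebar, map_sum]
    simp only [h1]
    rw [Finset.sum_sub_distrib, ← Finset.sum_smul]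
    simp [Finset.sum_ite_eq', ← honebar]
  -- (a)
  have hker : LinearMap.ker P = Submodule.span k {onebar} := by
    apply le_antisymm
    · intro f hf
      have h0 := hPf f
      rw [LinearMap.mem_ker.mp hf] at h0
      have hf2 : f = (∑ t : ↥M, f ((t : X))) • onebar := eq_of_sub_eq_zero h0.symm
      rw [Submodule.mem_span_singleton]
      exact ⟨_, hf2.symm⟩
    · rw [Submodule.span_le, Set.singleton_subset_iff]
      exact LinearMap.mem_ker.mpr hPone
  -- onebar ≠ 0
  have honenz : onebar ≠ 0 := by
    intro h
    have h1 : onebar (1 : X) = 1 := by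
      rw [honebar, Finsupp.finset_sum_apply]
      simp [Finsupp.single_apply, OneMemClass.coe_eq_one, Finset.sum_ite_eq']
    rw [h] at h1
    simp at h1
  -- norm 1 = 1
  have hn1 : norm (1 : X) = 1 := by
    have := hnorm 1 1
    simpa using this
  -- span {onebar} is a crossed submodule
  have hspanc : IsCrossedSubmodule k norm tact (Submodule.span k {onebar}) := by
    constructor
    · intro y
      rintro x ⟨f, hf, rfl⟩
      obtain ⟨c, rfl⟩ := Submodule.mem_span_singleton.mp hf
      rw [map_smul]
      apply Submodule.smul_mem
      have heq : (linTact k tact y) onebar = onebar := by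
        simpa [linTact, Finsupp.lmapDomain_apply] using hb1 y
      rw [heq]
      exact Submodule.mem_span_singleton_self onebar
    · apply le_antisymm
      · have h1 : Submodule.span k {onebar} ≤ Submodule.span k {onebar} ⊓ Jsub k norm 1 :=
          le_inf le_rfl (by rw [Submodule.span_le, Set.singleton_subset_iff]; exact hb2)
        refine h1.trans ?_
        exact le_iSup₂ (f := fun z (_ : z ∈ Set.range norm) =>
          Submodule.span k {onebar} ⊓ Jsub k norm z) (1 : X) ⟨1, hn1⟩
      · exact iSup₂_le fun z _ => inf_le_left
  refine ⟨hker, hb1, hb2, ?_⟩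
  intro V hV hVne
  have hW : V ⊓ Submodule.span k {onebar} = ⊥ := by
    by_contra hne
    obtain ⟨w, hw, hw0⟩ := (Submodule.ne_bot_iff _).mp hne
    obtain ⟨c, hc⟩ := Submodule.mem_span_singleton.mp hw.2
    have hc0 : c ≠ 0 := by
      rintro rfl
      rw [zero_smul] at hc
      exact hw0 hc.symm
    have honeV : onebar ∈ V := by
      have : onebar = c⁻¹ • w := by
        rw [← hc, smul_smul, inv_mul_cancel₀ hc0, one_smul]
      rw [this]
      exact Submodule.smul_mem V c⁻¹ hw.1
    have hle : Submodule.span k {onebar} ≤ V := by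
      rw [Submodule.span_le, Set.singleton_subset_iff]
      exact honeV
    rcases hV.2.2 (Submodule.span k {onebar}) hspanc hle with h | h
    · exact honenz (by
        have := Submodule.mem_span_singleton_self (R := k) onebar
        rw [h] at this
        simpa using this)
    · exact hVne h.symm
  refine ⟨hW, ?_⟩
  intro a ha b hb hab
  have h1 : a - b ∈ V := sub_mem ha hb
  have h2 : a - b ∈ Submodule.span k {onebar} := by
    rw [← hker, LinearMap.mem_ker, map_sub, hab, sub_self]
  have h3 : a - b ∈ V ⊓ Submodule.span k {onebar} := ⟨h1, h2⟩
  rw [hW] at h3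
  have : a - b = 0 := h3
  exact sub_eq_zero.mp this
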